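/- Toscano's transformation for terminating Lauricella F_D polynomials: for natural n, reals b_1,...,b_r, c and x_1,...,x_r with appropriate nonvanishing Pochhammer denominators, ∑_{n_1+···+n_r ≤ n} (-n)_m (b_1)_{n_1}···(b_r)_{n_r}/(c)_m · ∏ x_j^{n_j}/n_j! = ((c-Σb_j)_n/(c)_n) · ∑_{n_1+···+n_r ≤ n} (-n)_m (b_1)_{n_1}···(b_r)_{n_r}/(1+Σb_j-n-c)_m · ∏ (1-x_j)^{n_j}/n_j!, where m = n_1+···+n_r. -/

import Mathlib

open Finset Polynomial

/-- abbreviation -/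
noncomputable def PP (k : ℕ) (a : ℝ) : ℝ := (ascPochhammer ℝ k).eval a

lemma PP_zero (a : ℝ) : PP 0 a = 1 := by simp [PP]

lemma PP_succ (k : ℕ) (a : ℝ) : PP (k+1) a = PP k a * (a + k) :=
  ascPochhammer_succ_eval k a

lemma PP_add (p q : ℕ) (a : ℝ) : PP (p+q) a = PP p a * PP q (a + p) := by
  rw [PP, ← ascPochhammer_mul, eval_mul, eval_comp]
  simp [PP]

lemma PP_reflect (k : ℕ) (a : ℝ) : PP k a = (-1)^k * (descPochhammer ℝ k).eval (-a) := by
  rw [PP, show a = -(-a) by ring, ascPochhammer_eval_neg_eq_descPochhammer]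
  rw [neg_neg]

lemma DD_eval (k : ℕ) (a : ℝ) : (descPochhammer ℝ k).eval a = PP k (a - k + 1) :=
  descPochhammer_eval_eq_ascPochhammer (R := ℝ) a k

lemma smeval_desc (k : ℕ) (u : ℝ) : (descPochhammer ℤ k).smeval u = (descPochhammer ℝ k).eval u := by
  rw [← Polynomial.aeval_eq_smeval, aeval_def, eval₂_eq_eval_map, descPochhammer_map]

lemma DV (k : ℕ) (u v : ℝ) :
    (descPochhammer ℝ k).eval (u + v) = ∑ ij ∈ Finset.HasAntidiagonal.antidiagonal k,
      (k.choose ij.1 : ℝ) * ((descPochhammer ℝ ij.1).eval u * (descPochhammer ℝ ij.2).eval v) := by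
  have h := Ring.descPochhammer_smeval_add (R := ℝ) (r := u) (s := v) k (Commute.all u v)
  simpa [smeval_desc] using h

lemma DVr (N : ℕ) (u v : ℝ) :
    ∑ k ∈ Finset.range (N+1), (N.choose k : ℝ) *
      ((descPochhammer ℝ k).eval u * (descPochhammer ℝ (N-k)).eval v)
      = (descPochhammer ℝ N).eval (u + v) := by
  rw [DV, Finset.Nat.sum_antidiagonal_eq_sum_range_succ
    (f := fun i j => (N.choose i : ℝ) * ((descPochhammer ℝ i).eval u * (descPochhammer ℝ j).eval v))]

lemma BVr (s : ℕ) (u v : ℝ) :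
    ∑ i ∈ Finset.range (s+1), (s.choose i : ℝ) * (PP i u * PP (s-i) v) = PP s (u+v) := by
  rw [PP_reflect s (u+v), show -(u+v) = -u + -v by ring, ← DVr]
  rw [Finset.mul_sum]
  refine Finset.sum_congr rfl fun i hi => ?_
  have hi' : i ≤ s := Nat.lt_succ_iff.mp (Finset.mem_range.mp hi)
  rw [PP_reflect i u, PP_reflect (s-i) v]
  have : (-1 : ℝ)^s = (-1)^i * (-1)^(s-i) := by
    rw [← pow_add, Nat.add_sub_cancel' hi']
  rw [this]; ring

lemma CVpoly (N : ℕ) (a c : ℝ) :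
    ∑ k ∈ Finset.range (N+1), (-1:ℝ)^k * (N.choose k : ℝ) * PP k a * PP (N-k) (c + k)
      = PP N (c - a) := by
  have key : ∀ k ∈ Finset.range (N+1),
      (-1:ℝ)^k * (N.choose k : ℝ) * PP k a * PP (N-k) (c + k)
        = (N.choose k : ℝ) * ((descPochhammer ℝ k).eval (-a) *
            (descPochhammer ℝ (N-k)).eval (c + N - 1)) := by
    intro k hk
    have hk' : k ≤ N := Nat.lt_succ_iff.mp (Finset.mem_range.mp hk)
    have hcast : ((N - k : ℕ) : ℝ) = (N : ℝ) - k := by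
      rw [Nat.cast_sub hk']
    have h2 : (descPochhammer ℝ (N-k)).eval (c + (N:ℝ) - 1) = PP (N-k) (c + k) := by
      rw [DD_eval, hcast]
      congr 1; ring
    have hsq : (-1:ℝ)^k * (-1)^k = 1 := by
      rw [← pow_add, ← two_mul, pow_mul]; norm_num
    rw [PP_reflect k a, h2]
    linear_combination ((N.choose k : ℝ) * (descPochhammer ℝ k).eval (-a) * PP (N-k) (c + k)) * hsq
  rw [Finset.sum_congr rfl key, DVr]
  rw [DD_eval]
  congr 1
  push_cast
  ring

lemma PP_neg_nat (N k : ℕ) (hk : k ≤ N) :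
    PP k (-(N:ℝ)) = (-1:ℝ)^k * (N.choose k : ℝ) * (k.factorial : ℝ) := by
  rw [PP_reflect, neg_neg, descPochhammer_eval_eq_descFactorial]
  rw [Nat.descFactorial_eq_factorial_mul_choose]
  push_cast; ring

lemma CVdiv (N : ℕ) (a c : ℝ) (hc : ∀ k ≤ N, PP k c ≠ 0) :
    ∑ k ∈ Finset.range (N+1), PP k (-(N:ℝ)) * PP k a / (PP k c * (k.factorial : ℝ))
      = PP N (c - a) / PP N c := by
  rw [eq_div_iff (hc N le_rfl), Finset.sum_mul, ← CVpoly N a c]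
  refine Finset.sum_congr rfl fun k hk => ?_
  have hk' : k ≤ N := Nat.lt_succ_iff.mp (Finset.mem_range.mp hk)
  have hsplit : PP N c = PP k c * PP (N-k) (c + k) := by
    rw [← PP_add, Nat.add_sub_cancel' hk']
  rw [hsplit, PP_neg_nat N k hk']
  have h1 : PP k c ≠ 0 := hc k hk'
  have h2 : (k.factorial : ℝ) ≠ 0 := Nat.cast_ne_zero.mpr k.factorial_ne_zero
  field_simp

lemma sum_adT_succ {M : Type*} [AddCommMonoid M] (r s : ℕ) (g : (Fin (r+1) → ℕ) → M) :
    ∑ t ∈ Finset.Nat.antidiagonalTuple (r+1) s, g t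
      = ∑ p ∈ Finset.HasAntidiagonal.antidiagonal s, ∑ t ∈ Finset.Nat.antidiagonalTuple r p.2,
          g (Fin.cons p.1 t) := by
  rw [Finset.sum_sigma']
  refine Finset.sum_nbij' (i := fun t => ⟨(t 0, ∑ j : Fin r, t (Fin.succ j)), Fin.tail t⟩)
    (j := fun q => Fin.cons q.1.1 q.2) ?_ ?_ ?_ ?_ ?_
  · intro t ht
    rw [Finset.Nat.mem_antidiagonalTuple] at ht
    refine Finset.mem_sigma.mpr ⟨?_, ?_⟩
    · rw [Finset.HasAntidiagonal.mem_antidiagonal]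
      rw [← ht, Fin.sum_univ_succ]
    · rw [Finset.Nat.mem_antidiagonalTuple]
      rfl
  · intro q hq
    rw [Finset.mem_sigma, Finset.HasAntidiagonal.mem_antidiagonal, Finset.Nat.mem_antidiagonalTuple] at hq
    rw [Finset.Nat.mem_antidiagonalTuple, Fin.sum_univ_succ]
    simp [hq.2, hq.1]
  · intro t ht
    exact Fin.cons_self_tail t
  · intro q hq
    rw [Finset.mem_sigma, Finset.HasAntidiagonal.mem_antidiagonal, Finset.Nat.mem_antidiagonalTuple] at hq
    ext
    · simp
    · simp [hq.2]
    · simp [Fin.tail_cons]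
  · intro t ht
    rw [Fin.cons_self_tail]

lemma BVdiv (s : ℕ) (u v : ℝ) :
    ∑ p ∈ Finset.HasAntidiagonal.antidiagonal s, (PP p.1 u / (p.1.factorial : ℝ)) * (PP p.2 v / (p.2.factorial : ℝ))
      = PP s (u+v) / (s.factorial : ℝ) := by
  rw [Finset.Nat.sum_antidiagonal_eq_sum_range_succ
    (f := fun i j => (PP i u / (i.factorial : ℝ)) * (PP j v / (j.factorial : ℝ))), ← BVr s u v,
    Finset.sum_div]
  refine Finset.sum_congr rfl fun i hi => ?_
  have hi' : i ≤ s := Nat.lt_succ_iff.mp (Finset.mem_range.mp hi)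
  have hfac : (s.choose i : ℝ) = (s.factorial : ℝ) / ((i.factorial : ℝ) * ((s-i).factorial : ℝ)) := by
    rw [eq_div_iff (by positivity)]
    rw [← Nat.choose_mul_factorial_mul_factorial hi']
    push_cast; ring
  rw [hfac]
  have h1 : (i.factorial : ℝ) ≠ 0 := Nat.cast_ne_zero.mpr i.factorial_ne_zero
  have h2 : ((s-i).factorial : ℝ) ≠ 0 := Nat.cast_ne_zero.mpr (s-i).factorial_ne_zero
  have h3 : (s.factorial : ℝ) ≠ 0 := Nat.cast_ne_zero.mpr s.factorial_ne_zero
  field_simp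

lemma MV : ∀ (r : ℕ) (β : Fin r → ℝ) (s : ℕ),
    ∑ t ∈ Finset.Nat.antidiagonalTuple r s, ∏ j, (PP (t j) (β j) / ((t j).factorial : ℝ))
      = PP s (∑ j, β j) / (s.factorial : ℝ)
  | 0, β, 0 => by simp [PP]
  | 0, β, (s+1) => by
      rw [Finset.Nat.antidiagonalTuple_zero_succ]
      simp [PP, ascPochhammer_eval_zero]
  | (r+1), β, s => by
      rw [sum_adT_succ]
      have : ∀ p ∈ Finset.HasAntidiagonal.antidiagonal s,
          (∑ t ∈ Finset.Nat.antidiagonalTuple r p.2,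
            ∏ j, (PP ((Fin.cons p.1 t : Fin (r+1) → ℕ) j) (β j) / (((Fin.cons p.1 t : Fin (r+1) → ℕ) j).factorial : ℝ)))
          = (PP p.1 (β 0) / (p.1.factorial : ℝ)) * (PP p.2 (∑ j : Fin r, β (Fin.succ j)) / (p.2.factorial : ℝ)) := by
        intro p hp
        rw [← MV r (fun j => β j.succ) p.2, Finset.mul_sum]
        refine Finset.sum_congr rfl fun t ht => ?_
        rw [Fin.prod_univ_succ]
        simp [Fin.cons_zero, Fin.cons_succ]
      rw [Finset.sum_congr rfl this, BVdiv]
      rw [Fin.sum_univ_succ]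

lemma mem_SS {r N : ℕ} {t : Fin r → ℕ} :
    t ∈ (Fintype.piFinset fun _ : Fin r => Finset.range (N + 1)).filter (fun f => ∑ j, f j ≤ N)
      ↔ ∑ j, t j ≤ N := by
  constructor
  · exact fun h => (Finset.mem_filter.mp h).2
  · intro h
    refine Finset.mem_filter.mpr ⟨Fintype.mem_piFinset.mpr fun j => Finset.mem_range.mpr
      (Nat.lt_succ_iff.mpr (le_trans ?_ h)), h⟩
    exact Finset.single_le_sum (f := t) (fun _ _ => Nat.zero_le _) (Finset.mem_univ j)

lemma L1 (r N : ℕ) (β : Fin r → ℝ) (γ : ℝ) (hγ : ∀ k ≤ N, PP k γ ≠ 0) :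
    ∑ t ∈ (Fintype.piFinset fun _ : Fin r => Finset.range (N + 1)).filter (fun f => ∑ j, f j ≤ N),
      (PP (∑ j, t j) (-(N:ℝ)) * ∏ j, PP (t j) (β j)) / PP (∑ j, t j) γ *
        ∏ j, (1 / ((t j).factorial : ℝ))
      = PP N (γ - ∑ j, β j) / PP N γ := by
  rw [← Finset.sum_fiberwise_of_maps_to (g := fun t => ∑ j, t j) (t := Finset.range (N+1))
    (fun t ht => Finset.mem_range.mpr (Nat.lt_succ_iff.mpr ((mem_SS (t := t)).mp ht)))]
  rw [← CVdiv N (∑ j, β j) γ hγ]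
  refine Finset.sum_congr rfl fun s hs => ?_
  have hs' : s ≤ N := Nat.lt_succ_iff.mp (Finset.mem_range.mp hs)
  have hset : ((Fintype.piFinset fun _ : Fin r => Finset.range (N + 1)).filter
      (fun f => ∑ j, f j ≤ N)).filter (fun t => ∑ j, t j = s)
      = Finset.Nat.antidiagonalTuple r s := by
    ext t
    rw [Finset.mem_filter, mem_SS, Finset.Nat.mem_antidiagonalTuple]
    constructor
    · exact fun h => h.2
    · exact fun h => ⟨h ▸ hs', h⟩
  rw [hset]
  have : ∀ t ∈ Finset.Nat.antidiagonalTuple r s,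
      (PP (∑ j, t j) (-(N:ℝ)) * ∏ j, PP (t j) (β j)) / PP (∑ j, t j) γ *
        ∏ j, (1 / ((t j).factorial : ℝ))
      = PP s (-(N:ℝ)) / PP s γ * ∏ j, (PP (t j) (β j) / ((t j).factorial : ℝ)) := by
    intro t ht
    rw [Finset.Nat.mem_antidiagonalTuple] at ht
    rw [ht, Finset.prod_div_distrib, Finset.prod_div_distrib, Finset.prod_const_one]
    ring
  rw [Finset.sum_congr rfl this, ← Finset.mul_sum, MV r β s]
  field_simp

lemma mem_TT {r n : ℕ} (M : ℕ) {t : Fin r → ℕ} :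
    t ∈ (Fintype.piFinset fun _ : Fin r => Finset.range (n + 1)).filter
        (fun t => M + ∑ j, t j ≤ n)
      ↔ M + ∑ j, t j ≤ n := by
  constructor
  · exact fun h => (Finset.mem_filter.mp h).2
  · intro h
    refine Finset.mem_filter.mpr ⟨Fintype.mem_piFinset.mpr fun j => Finset.mem_range.mpr ?_, h⟩
    have := Finset.single_le_sum (f := t) (fun _ _ => Nat.zero_le _) (Finset.mem_univ j)
    omega

lemma reindex (r n : ℕ) (G : (Fin r → ℕ) → (Fin r → ℕ) → ℝ) :
    ∑ k ∈ (Fintype.piFinset fun _ : Fin r => Finset.range (n + 1)).filter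
        (fun f => ∑ j, f j ≤ n),
      ∑ m ∈ Fintype.piFinset (fun j => Finset.range (k j + 1)), G k m
    = ∑ m ∈ (Fintype.piFinset fun _ : Fin r => Finset.range (n + 1)).filter
        (fun f => ∑ j, f j ≤ n),
      ∑ t ∈ (Fintype.piFinset fun _ : Fin r => Finset.range (n + 1)).filter
          (fun t => (∑ j, m j) + ∑ j, t j ≤ n),
        G (fun j => m j + t j) m := by
  rw [Finset.sum_sigma', Finset.sum_sigma']
  refine Finset.sum_nbij' (i := fun q => ⟨q.2, fun j => q.1 j - q.2 j⟩)
    (j := fun q => ⟨fun j => q.1 j + q.2 j, q.1⟩) ?_ ?_ ?_ ?_ ?_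
  · rintro ⟨k, m⟩ hq
    rw [Finset.mem_sigma] at hq
    obtain ⟨hk, hm⟩ := hq
    have hk' : ∑ j, k j ≤ n := mem_SS.mp hk
    have hle : ∀ j, m j ≤ k j := fun j =>
      Nat.lt_succ_iff.mp (Finset.mem_range.mp (Fintype.mem_piFinset.mp hm j))
    dsimp only
    refine Finset.mem_sigma.mpr ⟨mem_SS.mpr ?_, (mem_TT _).mpr ?_⟩
    · exact le_trans (Finset.sum_le_sum fun j _ => hle j) hk'
    · show (∑ j, m j) + ∑ j, (k j - m j) ≤ n
      have h1 : (∑ j, m j) + ∑ j, (k j - m j) = ∑ j, k j := by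
        rw [← Finset.sum_add_distrib]
        exact Finset.sum_congr rfl fun j _ => Nat.add_sub_cancel' (hle j)
      omega
  · rintro ⟨m, t⟩ hq
    rw [Finset.mem_sigma] at hq
    obtain ⟨hm, ht⟩ := hq
    have ht' : (∑ j, m j) + ∑ j, t j ≤ n := (mem_TT (∑ j, m j)).mp ht
    dsimp only
    refine Finset.mem_sigma.mpr ⟨mem_SS.mpr ?_, ?_⟩
    · show ∑ j, (m j + t j) ≤ n
      rw [Finset.sum_add_distrib]; omega
    · refine Fintype.mem_piFinset.mpr fun j => Finset.mem_range.mpr ?_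
      show m j < m j + t j + 1
      omega
  · rintro ⟨k, m⟩ hq
    rw [Finset.mem_sigma] at hq
    have hle : ∀ j, m j ≤ k j := fun j =>
      Nat.lt_succ_iff.mp (Finset.mem_range.mp (Fintype.mem_piFinset.mp hq.2 j))
    dsimp only
    have h1 : (fun j => m j + (k j - m j)) = k := funext fun j => Nat.add_sub_cancel' (hle j)
    rw [h1]
  · rintro ⟨m, t⟩ hq
    dsimp only
    have h1 : (fun j => m j + t j - m j) = t := funext fun j => by omega
    rw [h1]
  · rintro ⟨k, m⟩ hq
    rw [Finset.mem_sigma] at hq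
    have hle : ∀ j, m j ≤ k j := fun j =>
      Nat.lt_succ_iff.mp (Finset.mem_range.mp (Fintype.mem_piFinset.mp hq.2 j))
    dsimp only
    congr 1
    funext j; exact (Nat.add_sub_cancel' (hle j)).symm

lemma choose_fac (m t : ℕ) :
    (((m + t).choose m : ℝ)) / ((m + t).factorial : ℝ)
      = (1 / (m.factorial : ℝ)) * (1 / (t.factorial : ℝ)) := by
  have h := Nat.choose_mul_factorial_mul_factorial (Nat.le_add_right m t)
  have h2 : (m + t).choose m * m.factorial * (m + t - m).factorial = (m+t).factorial := h
  rw [Nat.add_sub_cancel_left] at h2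
  have hm : (m.factorial : ℝ) ≠ 0 := Nat.cast_ne_zero.mpr m.factorial_ne_zero
  have ht : (t.factorial : ℝ) ≠ 0 := Nat.cast_ne_zero.mpr t.factorial_ne_zero
  have hmt : ((m+t).factorial : ℝ) ≠ 0 := Nat.cast_ne_zero.mpr (m+t).factorial_ne_zero
  field_simp
  have h3 : ((m + t).choose m) * (m.factorial * t.factorial) = (m+t).factorial := by
    rw [← h2]; ring
  rw [mul_assoc]; exact_mod_cast h3

lemma inner_eval (r n : ℕ) (b x : Fin r → ℝ) (c : ℝ)
    (hc : ∀ k ≤ n, PP k c ≠ 0) (m : Fin r → ℕ) (hm : ∑ j, m j ≤ n) :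
    ∑ t ∈ (Fintype.piFinset fun _ : Fin r => Finset.range (n + 1)).filter
        (fun t => (∑ j, m j) + ∑ j, t j ≤ n),
      (PP (∑ j, (m j + t j)) (-(n:ℝ)) * ∏ j, PP (m j + t j) (b j)) /
        PP (∑ j, (m j + t j)) c *
        ∏ j, (((m j + t j).choose (m j) : ℝ) * (x j - 1)^(m j) / ((m j + t j).factorial : ℝ))
    = (PP (∑ j, m j) (-(n:ℝ)) * ∏ j, PP (m j) (b j)) / PP (∑ j, m j) c *
        (∏ j, ((x j - 1)^(m j) / ((m j).factorial : ℝ))) *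
        (PP (n - ∑ j, m j) (c - ∑ j, b j) /
          PP (n - ∑ j, m j) (c + ((∑ j, m j : ℕ) : ℝ))) := by
  set M := ∑ j, m j with hM
  set N' := n - M with hN'
  have hMn : ((M:ℕ):ℝ) ≤ (n:ℝ) := Nat.cast_le.mpr hm
  have hsetEq : (Fintype.piFinset fun _ : Fin r => Finset.range (n + 1)).filter
        (fun t => M + ∑ j, t j ≤ n)
      = (Fintype.piFinset fun _ : Fin r => Finset.range (N' + 1)).filter
        (fun t => ∑ j, t j ≤ N') := by
    ext t
    rw [mem_TT, mem_SS]
    omega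
  rw [hsetEq]
  have hγ : ∀ k ≤ N', PP k (c + (M:ℝ)) ≠ 0 := by
    intro k hk
    have h1 : PP (M + k) c = PP M c * PP k (c + (M:ℝ)) := PP_add M k c
    have h2 : PP (M + k) c ≠ 0 := hc (M + k) (by omega)
    rw [h1] at h2
    exact right_ne_zero_of_mul h2
  have key := L1 r N' (fun j => b j + (m j : ℝ)) (c + (M:ℝ)) hγ
  have hterm : ∀ t ∈ (Fintype.piFinset fun _ : Fin r => Finset.range (N' + 1)).filter
        (fun t => ∑ j, t j ≤ N'),
      (PP (∑ j, (m j + t j)) (-(n:ℝ)) * ∏ j, PP (m j + t j) (b j)) /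
        PP (∑ j, (m j + t j)) c *
        ∏ j, (((m j + t j).choose (m j) : ℝ) * (x j - 1)^(m j) / ((m j + t j).factorial : ℝ))
      = ((PP M (-(n:ℝ)) * ∏ j, PP (m j) (b j)) / PP M c *
          (∏ j, ((x j - 1)^(m j) / ((m j).factorial : ℝ)))) *
        ((PP (∑ j, t j) (-(N':ℝ)) * ∏ j, PP (t j) (b j + (m j : ℝ))) /
            PP (∑ j, t j) (c + (M:ℝ)) * ∏ j, (1 / ((t j).factorial : ℝ))) := by
    intro t ht
    have hsum : ∑ j, (m j + t j) = M + ∑ j, t j := by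
      rw [Finset.sum_add_distrib]
    have hneg : -(n:ℝ) + (M:ℝ) = -((N':ℕ):ℝ) := by
      rw [hN', Nat.cast_sub hm]; ring
    have e1 : PP (∑ j, (m j + t j)) (-(n:ℝ))
        = PP M (-(n:ℝ)) * PP (∑ j, t j) (-((N':ℕ):ℝ)) := by
      rw [hsum, PP_add, hneg]
    have e2 : PP (∑ j, (m j + t j)) c = PP M c * PP (∑ j, t j) (c + (M:ℝ)) := by
      rw [hsum, PP_add]
    have e3 : (∏ j, PP (m j + t j) (b j))
        = (∏ j, PP (m j) (b j)) * ∏ j, PP (t j) (b j + (m j : ℝ)) := by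
      rw [← Finset.prod_mul_distrib]
      exact Finset.prod_congr rfl fun j _ => PP_add (m j) (t j) (b j)
    have e4 : (∏ j, (((m j + t j).choose (m j) : ℝ) * (x j - 1)^(m j) / ((m j + t j).factorial : ℝ)))
        = (∏ j, ((x j - 1)^(m j) / ((m j).factorial : ℝ))) * ∏ j, (1 / ((t j).factorial : ℝ)) := by
      rw [← Finset.prod_mul_distrib]
      refine Finset.prod_congr rfl fun j _ => ?_
      rw [mul_comm (((m j + t j).choose (m j) : ℝ)) ((x j - 1)^(m j)), mul_div_assoc,
        choose_fac]
      ring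
    rw [e1, e2, e3, e4]
    ring
  rw [Finset.sum_congr rfl hterm, ← Finset.mul_sum, key]
  have harg : c + (M:ℝ) - ∑ j, (b j + (m j : ℝ)) = c - ∑ j, b j := by
    rw [Finset.sum_add_distrib]
    push_cast [hM]
    ring
  rw [harg]

lemma PP_def (k : ℕ) (a : ℝ) : (ascPochhammer ℝ k).eval a = PP k a := rfl

theorem toscano_lauricella_transformation (r n : ℕ) (b x : Fin r → ℝ) (c : ℝ)
    (hc : ∀ k ≤ n, (ascPochhammer ℝ k).eval c ≠ 0)
    (hd : ∀ k ≤ n, (ascPochhammer ℝ k).eval (1 + (∑ j, b j) - (n : ℝ) - c) ≠ 0) :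
    ∑ f ∈ (Fintype.piFinset fun _ : Fin r => Finset.range (n + 1)).filter
        (fun f => ∑ j, f j ≤ n),
        ((ascPochhammer ℝ (∑ j, f j)).eval (-(n : ℝ)) *
            ∏ j, (ascPochhammer ℝ (f j)).eval (b j)) /
          (ascPochhammer ℝ (∑ j, f j)).eval c *
          ∏ j, x j ^ f j / (Nat.factorial (f j) : ℝ) =
      ((ascPochhammer ℝ n).eval (c - ∑ j, b j) / (ascPochhammer ℝ n).eval c) *
        ∑ f ∈ (Fintype.piFinset fun _ : Fin r => Finset.range (n + 1)).filter
            (fun f => ∑ j, f j ≤ n),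
          ((ascPochhammer ℝ (∑ j, f j)).eval (-(n : ℝ)) *
              ∏ j, (ascPochhammer ℝ (f j)).eval (b j)) /
            (ascPochhammer ℝ (∑ j, f j)).eval (1 + (∑ j, b j) - (n : ℝ) - c) *
            ∏ j, (1 - x j) ^ f j / (Nat.factorial (f j) : ℝ) := by
  simp only [PP_def] at hc hd ⊢
  set B := ∑ j, b j with hB
  -- Step 1: binomial expansion of x^k
  have hexp : ∀ k ∈ (Fintype.piFinset fun _ : Fin r => Finset.range (n + 1)).filter
      (fun f => ∑ j, f j ≤ n),
      (PP (∑ j, k j) (-(n:ℝ)) * ∏ j, PP (k j) (b j)) / PP (∑ j, k j) c *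
        ∏ j, x j ^ k j / ((k j).factorial : ℝ)
      = ∑ m ∈ Fintype.piFinset (fun j => Finset.range (k j + 1)),
          (PP (∑ j, k j) (-(n:ℝ)) * ∏ j, PP (k j) (b j)) / PP (∑ j, k j) c *
            ∏ j, (((k j).choose (m j) : ℝ) * (x j - 1)^(m j) / ((k j).factorial : ℝ)) := by
    intro k _
    have hone : ∀ j, x j ^ k j / ((k j).factorial : ℝ)
        = ∑ mj ∈ Finset.range (k j + 1),
            ((k j).choose mj : ℝ) * (x j - 1)^mj / ((k j).factorial : ℝ) := by
      intro j
      have hxx : x j ^ k j = (x j - 1 + 1)^(k j) := by norm_num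
      rw [hxx, add_pow, Finset.sum_div]
      exact Finset.sum_congr rfl fun mj _ => by rw [one_pow]; ring
    rw [Finset.prod_congr rfl (fun j _ => hone j), Finset.prod_univ_sum, Finset.mul_sum]
  rw [Finset.sum_congr rfl hexp,
    reindex r n (fun k m => (PP (∑ j, k j) (-(n:ℝ)) * ∏ j, PP (k j) (b j)) / PP (∑ j, k j) c *
      ∏ j, (((k j).choose (m j) : ℝ) * (x j - 1)^(m j) / ((k j).factorial : ℝ)))]
  have hinner : ∀ m ∈ (Fintype.piFinset fun _ : Fin r => Finset.range (n + 1)).filter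
      (fun f => ∑ j, f j ≤ n),
      (∑ t ∈ (Fintype.piFinset fun _ : Fin r => Finset.range (n + 1)).filter
          (fun t => (∑ j, m j) + ∑ j, t j ≤ n),
        (PP (∑ j, (m j + t j)) (-(n:ℝ)) * ∏ j, PP (m j + t j) (b j)) /
          PP (∑ j, (m j + t j)) c *
          ∏ j, (((m j + t j).choose (m j) : ℝ) * (x j - 1)^(m j) / ((m j + t j).factorial : ℝ)))
      = (PP (∑ j, m j) (-(n:ℝ)) * ∏ j, PP (m j) (b j)) / PP (∑ j, m j) c *
          (∏ j, ((x j - 1)^(m j) / ((m j).factorial : ℝ))) *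
          (PP (n - ∑ j, m j) (c - B) /
            PP (n - ∑ j, m j) (c + ((∑ j, m j : ℕ) : ℝ))) := by
    intro m hmS
    exact inner_eval r n b x c hc m (mem_SS.mp hmS)
  rw [Finset.sum_congr rfl hinner, Finset.mul_sum]
  refine Finset.sum_congr rfl fun m hmS => ?_
  have hm : ∑ j, m j ≤ n := mem_SS.mp hmS
  set M := ∑ j, m j with hM
  have hcast : ((n - M : ℕ):ℝ) = (n:ℝ) - (M:ℝ) := Nat.cast_sub hm
  have hMc : PP n c = PP M c * PP (n - M) (c + (M:ℝ)) := by
    have h := PP_add M (n - M) c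
    rwa [show M + (n - M) = n from by omega] at h
  have h2 : PP n (c - B) = PP (n - M) (c - B) * PP M (c - B + ((n - M : ℕ):ℝ)) := by
    have h := PP_add (n - M) M (c - B)
    rwa [show (n - M) + M = n from by omega] at h
  have h3 : PP M (c - B + ((n - M : ℕ):ℝ)) = (-1:ℝ)^M * PP M (1 + B - (n:ℝ) - c) := by
    rw [PP_reflect, DD_eval, hcast]
    congr 2
    ring
  have h4 : (∏ j, ((x j - 1)^(m j) / ((m j).factorial : ℝ)))
      = (-1:ℝ)^M * ∏ j, ((1 - x j)^(m j) / ((m j).factorial : ℝ)) := by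
    have : ∀ j ∈ Finset.univ, (x j - 1)^(m j) / ((m j).factorial : ℝ)
        = (-1:ℝ)^(m j) * ((1 - x j)^(m j) / ((m j).factorial : ℝ)) := by
      intro j _
      rw [show x j - 1 = -(1 - x j) from by ring, neg_pow]
      ring
    rw [Finset.prod_congr rfl this, Finset.prod_mul_distrib, Finset.prod_pow_eq_pow_sum]
  have hPMc : PP M c ≠ 0 := hc M hm
  have hPnc : PP n c ≠ 0 := hc n le_rfl
  have hPD : PP M (1 + B - (n:ℝ) - c) ≠ 0 := hd M hm
  have hQ : PP (n - M) (c + (M:ℝ)) ≠ 0 := by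
    rw [hMc] at hPnc
    exact right_ne_zero_of_mul hPnc
  rw [h4, h2, h3, hMc]
  field_simp

-- axiom check
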